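/- arXiv:2205.15141 — 3 statements merged into one kernel-verified Lean document; each statement's English description precedes it below -/
import Mathlib

section
/- Let D₁ and D₂ be finite Boolean subalgebras of a finite Boolean algebra D⋆ such that any comparable pair of elements x ∈ D₁ and y ∈ D₂ has one of them equal to ⊤ or ⊥. Then for every x ∈ D₁ \ {⊤, ⊥} and every y₁, y₂ ∈ D₂ \ {⊤, ⊥}, if y₁ < y₂ then ⊥ < x ⊓ y₁ < x ⊓ y₂ and x ⊔ y₁ < x ⊔ y₂ < ⊤ in D⋆. -/
/-- A subset of a Boolean algebra that is (the carrier of) a sub-Boolean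
algebra: it contains `⊤` and `⊥` and is closed under complement, meet and
join. -/
def IsSubBoolAlg {D : Type*} [BooleanAlgebra D] (S : Set D) : Prop :=
  ⊤ ∈ S ∧ ⊥ ∈ S ∧ (∀ x ∈ S, xᶜ ∈ S) ∧
    (∀ x ∈ S, ∀ y ∈ S, x ⊓ y ∈ S) ∧ (∀ x ∈ S, ∀ y ∈ S, x ⊔ y ∈ S)

/-- The atoms of a sub-Boolean algebra with carrier `S`. -/
def atomsOf {D : Type*} [BooleanAlgebra D] (S : Set D) : Set D :=
  {x | x ∈ S ∧ ⊥ < x ∧ ∀ y ∈ S, y ≤ x → y = x ∨ y = ⊥}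

theorem stmt2 {D : Type*} [BooleanAlgebra D] [Fintype D]
    (S₁ S₂ : Set D) (h₁ : IsSubBoolAlg S₁) (h₂ : IsSubBoolAlg S₂)
    (i j : ℕ) (hi : 0 < i) (hj : 0 < j)
    (hc₁ : (atomsOf S₁).ncard = 2 ^ i) (hc₂ : (atomsOf S₂).ncard = 2 ^ j)
    (hprod : (atomsOf S₁).ncard * (atomsOf S₂).ncard
      = (atomsOf (Set.univ : Set D)).ncard)
    (hcomp : ∀ x ∈ S₁, ∀ y ∈ S₂, (x ≤ y ∨ y ≤ x) →
      x = ⊤ ∨ x = ⊥ ∨ y = ⊤ ∨ y = ⊥) :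
    ∀ x ∈ S₁ \ ({⊤, ⊥} : Set D), ∀ y₁ ∈ S₂ \ ({⊤, ⊥} : Set D),
      ∀ y₂ ∈ S₂ \ ({⊤, ⊥} : Set D), y₁ < y₂ →
        (⊥ < x ⊓ y₁ ∧ x ⊓ y₁ < x ⊓ y₂) ∧ (x ⊔ y₁ < x ⊔ y₂ ∧ x ⊔ y₂ < ⊤) := by
  obtain ⟨hT₂, hB₂, hC₂, hM₂, hJ₂⟩ := h₂
  obtain ⟨hT₁, hB₁, hC₁, hM₁, hJ₁⟩ := h₁
  rintro x ⟨hxS, hx⟩ y₁ ⟨hy₁S, hy₁⟩ y₂ ⟨hy₂S, hy₂⟩ hlt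
  simp only [Set.mem_insert_iff, Set.mem_singleton_iff, not_or] at hx hy₁ hy₂
  obtain ⟨hxT, hxB⟩ := hx
  obtain ⟨hy₁T, hy₁B⟩ := hy₁
  obtain ⟨hy₂T, hy₂B⟩ := hy₂
  have key : ∀ z ∈ S₁, z ≠ ⊤ → z ≠ ⊥ → ∀ y ∈ S₂, y ≠ ⊤ → y ≠ ⊥ →
      ¬ (z ≤ y ∨ y ≤ z) := by
    intro z hzS hzT hzB y hyS hyT hyB h
    rcases hcomp z hzS y hyS h with h | h | h | h <;> tauto
  refine ⟨⟨?_, ?_⟩, ?_, ?_⟩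
  · rcases eq_bot_or_bot_lt (x ⊓ y₁) with h | h
    · exfalso
      have hle : x ≤ y₁ᶜ := le_compl_iff_disjoint_right.2 (disjoint_iff.2 h)
      exact key x hxS hxT hxB y₁ᶜ (hC₂ y₁ hy₁S) (by simp [hy₁B]) (by simp [hy₁T])
        (Or.inl hle)
    · exact h
  · refine lt_of_le_of_ne (inf_le_inf_left x hlt.le) fun h => ?_
    have hd : x ⊓ (y₂ ⊓ y₁ᶜ) = ⊥ := by
      calc x ⊓ (y₂ ⊓ y₁ᶜ) = (x ⊓ y₂) ⊓ y₁ᶜ := by rw [inf_assoc]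
        _ = (x ⊓ y₁) ⊓ y₁ᶜ := by rw [h]
        _ = ⊥ := by rw [inf_assoc, inf_compl_eq_bot, inf_bot_eq]
    have hle : x ≤ (y₂ ⊓ y₁ᶜ)ᶜ := le_compl_iff_disjoint_right.2 (disjoint_iff.2 hd)
    have hdS : y₂ ⊓ y₁ᶜ ∈ S₂ := hM₂ y₂ hy₂S y₁ᶜ (hC₂ y₁ hy₁S)
    have hdB : y₂ ⊓ y₁ᶜ ≠ ⊥ := by
      intro hb
      have : y₂ ≤ y₁ := by
        have := le_compl_iff_disjoint_right.2 (disjoint_iff.2 hb)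
        simpa using this
      exact absurd this (not_le_of_gt hlt)
    have hdT : y₂ ⊓ y₁ᶜ ≠ ⊤ := by
      intro ht
      rw [inf_eq_top_iff] at ht
      exact hy₁B (by simpa using ht.2)
    exact key x hxS hxT hxB ((y₂ ⊓ y₁ᶜ)ᶜ) (hC₂ _ hdS)
      (by rw [ne_eq, compl_eq_top]; exact hdB)
      (by rw [ne_eq, compl_eq_bot]; exact hdT) (Or.inl hle)
  · refine lt_of_le_of_ne (sup_le_sup_left hlt.le x) fun h => ?_
    have hy2le : y₂ ≤ x ⊔ y₁ := h ▸ le_sup_right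
    have hdle : y₂ ⊓ y₁ᶜ ≤ x := by
      calc y₂ ⊓ y₁ᶜ ≤ (x ⊔ y₁) ⊓ y₁ᶜ := inf_le_inf_right _ hy2le
        _ = (x ⊓ y₁ᶜ) ⊔ (y₁ ⊓ y₁ᶜ) := by rw [inf_sup_right]
        _ ≤ x := by simp
    have hdS : y₂ ⊓ y₁ᶜ ∈ S₂ := hM₂ y₂ hy₂S y₁ᶜ (hC₂ y₁ hy₁S)
    have hdB : y₂ ⊓ y₁ᶜ ≠ ⊥ := by
      intro hb
      have : y₂ ≤ y₁ := by
        have := le_compl_iff_disjoint_right.2 (disjoint_iff.2 hb)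
        simpa using this
      exact absurd this (not_le_of_gt hlt)
    have hdT : y₂ ⊓ y₁ᶜ ≠ ⊤ := by
      intro ht
      rw [inf_eq_top_iff] at ht
      exact hy₁B (by simpa using ht.2)
    exact key x hxS hxT hxB (y₂ ⊓ y₁ᶜ) hdS hdT hdB (Or.inr hdle)
  · refine lt_of_le_of_ne le_top fun h => ?_
    have hle : xᶜ ≤ y₂ := by
      calc xᶜ = xᶜ ⊓ (x ⊔ y₂) := by rw [h, inf_top_eq]
        _ = (xᶜ ⊓ x) ⊔ (xᶜ ⊓ y₂) := by rw [inf_sup_left]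
        _ ≤ y₂ := by simp
    exact key xᶜ (hC₁ x hxS) (by simp [hxB]) (by simp [hxT]) y₂ hy₂S hy₂T hy₂B
      (Or.inl hle)
end

section
/- Suppose ⟨(G, Π), D, I⟩ satisfies the aass and das constraints. Then for every edge (s₁, s₂) in the graph typed with 'attack': (1) the edge is not also typed 'support'; and (2) for every statement s, if (s, s₁) and (s, s₂) are both edges typed 'support' sharing some common theme t typing both, a contradiction follows — i.e., either (s, s₂) is not an edge, or not typed 'support', or there is no common theme. -/
/-- Consequence of `das` (with `aass`): an `attack` edge is never also a
`support` edge; and no statement can support, for a shared theme, both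
endpoints of an attack edge. Effective aspects are infima `sInf (I T s)` in a
complete Boolean algebra `D`; every edge is typed with at least one theme. -/
theorem stmt11 {Theme Stmt D : Type*} [CompleteBooleanAlgebra D]
    (Rel : Set (Stmt × Stmt)) (ThE : Stmt × Stmt → Set Theme)
    (isAtt isSup : Stmt × Stmt → Prop)
    (I : Set Theme → Stmt → Set D)
    (hwf : ∀ r ∈ Rel, (ThE r).Nonempty)
    (aass : ∀ s' s, (s', s) ∈ Rel → ∀ T : Set Theme, T.Nonempty → T ⊆ ThE (s', s) →
      (isAtt (s', s) →
        (I T s').Nonempty ∧ (I T s).Nonempty ∧ sInf (I T s') ≠ sInf (I T s)) ∧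
      (isSup (s', s) →
        sInf (I T s') ≤ sInf (I T s) ∨ sInf (I T s) ≤ sInf (I T s')))
    (das : ∀ s' s, (s', s) ∈ Rel → ∀ T : Set Theme, T.Nonempty → T ⊆ ThE (s', s) →
      (isAtt (s', s) →
        ¬ sInf (I T s') ≤ sInf (I T s) ∧ ¬ sInf (I T s) ≤ sInf (I T s')) ∧
      (isSup (s', s) → sInf (I T s') = sInf (I T s))) :
    ∀ s₁ s₂, (s₁, s₂) ∈ Rel → isAtt (s₁, s₂) →
      (¬ isSup (s₁, s₂)) ∧
      (∀ s : Stmt,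
        ¬ ((s, s₁) ∈ Rel ∧ isSup (s, s₁) ∧ (s, s₂) ∈ Rel ∧ isSup (s, s₂) ∧
          ∃ t, t ∈ ThE (s, s₁) ∧ t ∈ ThE (s, s₂) ∧ t ∈ ThE (s₁, s₂))) := by
  intro s₁ s₂ hmem hatt
  constructor
  · intro hsup
    obtain ⟨t, ht⟩ := hwf _ hmem
    have h := das s₁ s₂ hmem {t} (Set.singleton_nonempty t)
      (Set.singleton_subset_iff.mpr ht)
    exact (h.1 hatt).1 (le_of_eq (h.2 hsup))
  · rintro s ⟨h1, h2, h3, h4, t, ht1, ht2, ht3⟩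
    have e1 := (das s s₁ h1 {t} (Set.singleton_nonempty t)
      (Set.singleton_subset_iff.mpr ht1)).2 h2
    have e2 := (das s s₂ h3 {t} (Set.singleton_nonempty t)
      (Set.singleton_subset_iff.mpr ht2)).2 h4
    have h := (das s₁ s₂ hmem {t} (Set.singleton_nonempty t)
      (Set.singleton_subset_iff.mpr ht3)).1 hatt
    exact h.1 (le_of_eq (e1 ▸ e2))
end

section
/- There exists a typed graph (G, Π) violating the theme relevance constraint tr such that for every complete Boolean algebra D and every interpretation I, the model ⟨(G, Π), D, I⟩ fails to simultaneously satisfy the constraints pr, vi and aass. -/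
/-- Theme relevance: every edge has a theme typing the edge and both its
endpoints. -/
def TrC {Theme Stmt : Type*} (Rel : Set (Stmt × Stmt))
    (ThE : Stmt × Stmt → Set Theme) (ThS : Stmt → Set Theme) : Prop :=
  ∀ r ∈ Rel, ∃ t, t ∈ ThE r ∧ t ∈ ThS r.1 ∧ t ∈ ThS r.2

/-- Proper range (for ordinary statements). -/
def PrC {Theme Stmt D : Type*} (ThS : Stmt → Set Theme)
    (I : Set Theme → Stmt → Set D) : Prop :=
  ∀ (T : Set Theme) (a : Stmt), I T a ⊆ I (T ∩ ThS a) a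

/-- Vacuous interpretation. -/
def ViC {Theme Stmt D : Type*} (I : Set Theme → Stmt → Set D) : Prop :=
  ∀ a : Stmt, I ∅ a = ∅

/-- The attack half of `aass`. -/
def AassC {Theme Stmt D : Type*} [CompleteBooleanAlgebra D]
    (Rel : Set (Stmt × Stmt)) (ThE : Stmt × Stmt → Set Theme)
    (isAtt : Stmt × Stmt → Prop) (I : Set Theme → Stmt → Set D) : Prop :=
  ∀ s' s, (s', s) ∈ Rel → isAtt (s', s) →
    ∀ T : Set Theme, T.Nonempty → T ⊆ ThE (s', s) →
      (I T s').Nonempty ∧ (I T s).Nonempty ∧ sInf (I T s') ≠ sInf (I T s)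

/-- There is a typed graph (two ordinary statements, themes drawn from `ℕ`)
violating `tr` such that, for every complete Boolean algebra `D` and every
interpretation `I`, the resulting model fails to satisfy `pr`, `vi` and
`aass` simultaneously. -/
theorem stmt19 :
    ∃ (Stmt : Type) (Rel : Set (Stmt × Stmt)) (ThE : Stmt × Stmt → Set ℕ)
      (ThS : Stmt → Set ℕ) (isAtt : Stmt × Stmt → Prop),
      Rel.Nonempty ∧
      ¬ TrC Rel ThE ThS ∧
      ∀ (D : Type) (inst : CompleteBooleanAlgebra D)
        (I : Set ℕ → Stmt → Set D),
        ¬ (PrC ThS I ∧ ViC I ∧ @AassC ℕ Stmt D inst Rel ThE isAtt I) := by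
  refine ⟨Bool, {(false, true)}, fun _ => {2}, fun _ => {1}, fun _ => True,
    ⟨_, rfl⟩, ?_, ?_⟩
  · intro h
    obtain ⟨t, ht2, ht1, _⟩ := h (false, true) rfl
    simp only [Set.mem_singleton_iff] at ht2 ht1
    omega
  · rintro D inst I ⟨hpr, hvi, haass⟩
    obtain ⟨⟨x, hx⟩, _, _⟩ := haass false true rfl trivial {2} ⟨2, rfl⟩
      (by intro y hy; exact hy)
    have := hpr {2} false hx
    have h2 : ({2} : Set ℕ) ∩ {1} = ∅ := by
      ext n
      simp only [Set.mem_inter_iff, Set.mem_singleton_iff,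
        Set.mem_empty_iff_false, iff_false, not_and]
      rintro rfl h
      exact absurd h (by norm_num)
    rw [h2, hvi] at this
    exact this
end
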